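/- Let G be the (n×n)-grid and let Q ⊆ V_1 be a pyramidal set with i_1(Q) ≤ i_2(Q). Then the set Q' obtained from Q by the right shifting is right-pyramidal and satisfies δ(Q') ≤ δ(Q). -/

import Mathlib

/-- Vertices of the (n × n)-grid, as pairs of integers in {1, ..., n}. -/
def gridSet (n : ℕ) : Finset (ℕ × ℕ) := Finset.Icc 1 n ×ˢ Finset.Icc 1 n

/-- Grid adjacency: (x,y) ~ (x',y') iff |x-x'| + |y-y'| = 1. -/
def gridAdj (p q : ℕ × ℕ) : Prop :=
  |(p.1 : ℤ) - q.1| + |(p.2 : ℤ) - q.2| = 1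

instance (p q : ℕ × ℕ) : Decidable (gridAdj p q) := by unfold gridAdj; infer_instance

/-- V₁: the grid vertices (x, y) with x + y even. -/
def V1 (n : ℕ) : Finset (ℕ × ℕ) := (gridSet n).filter (fun p => Even (p.1 + p.2))

/-- N(S): the set of grid vertices outside S that are adjacent to some vertex of S. -/
def gridNbr (n : ℕ) (S : Finset (ℕ × ℕ)) : Finset (ℕ × ℕ) :=
  (gridSet n).filter (fun q => q ∉ S ∧ ∃ p ∈ S, gridAdj p q)

/-- δ(S) = |N(S)|. -/
def deltaN (n : ℕ) (S : Finset (ℕ × ℕ)) : ℕ := (gridNbr n S).card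

/-- A set Q ⊆ V₁ is pyramidal if for every (x, y) ∈ Q with y ≥ 2:
(x-1, y-1) ∈ Q whenever x ≥ 2, and (x+1, y-1) ∈ Q whenever x ≤ n-1. -/
def Pyramidal (n : ℕ) (Q : Finset (ℕ × ℕ)) : Prop :=
  ∀ x y : ℕ, (x, y) ∈ Q → 2 ≤ y →
    (2 ≤ x → (x - 1, y - 1) ∈ Q) ∧ (x + 1 ≤ n → (x + 1, y - 1) ∈ Q)

/-- A pyramidal set Q is right-pyramidal if (x,y) ∈ Q and x ≤ n-2 imply (x+2, y) ∈ Q. -/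
def RightPyramidal (n : ℕ) (Q : Finset (ℕ × ℕ)) : Prop :=
  Pyramidal n Q ∧ ∀ x y : ℕ, (x, y) ∈ Q → x + 2 ≤ n → (x + 2, y) ∈ Q

/-- Xᵢ = Rᵢ ∩ V₁: the vertices of V₁ in row i (ordered by increasing x-coordinate). -/
def Xi (n i : ℕ) : Finset (ℕ × ℕ) := (V1 n).filter (fun p => p.2 = i)

/-- X̄ᵢ = Rᵢ ∩ V₂: the grid vertices (x, y) with y = i and x + y odd. -/
def Xbar (n i : ℕ) : Finset (ℕ × ℕ) := (gridSet n).filter (fun p => Odd (p.1 + p.2) ∧ p.2 = i)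

/-- i₁(Q): the largest y with (1, y) ∈ Q, or 0 if there is none. -/
def i1 (Q : Finset (ℕ × ℕ)) : ℕ := (Q.filter (fun p => p.1 = 1)).sup Prod.snd

/-- i₂(Q): the largest y with (n, y) ∈ Q, or 0 if there is none. -/
def i2 (n : ℕ) (Q : Finset (ℕ × ℕ)) : ℕ := (Q.filter (fun p => p.1 = n)).sup Prod.snd

/-- The right shifting of Q ⊆ V₁: in each row, the r = |Xᵢ ∩ Q| vertices of Xᵢ ∩ Q are
replaced by the last r vertices x_{ℓ(i)-r+1}ⁱ, ..., x_{ℓ(i)}ⁱ of Xᵢ (by increasing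
x-coordinate). A vertex v of V₁ belongs to the shifted set iff its rank from the top of
its row (within V₁) is ≤ r. -/
def rightShift (n : ℕ) (Q : Finset (ℕ × ℕ)) : Finset (ℕ × ℕ) :=
  (gridSet n).filter (fun v => Even (v.1 + v.2) ∧
    ((Xi n v.2).filter (fun u => v.1 ≤ u.1)).card ≤ (Q ∩ Xi n v.2).card)

namespace RSAux

/-- x-coordinates of row-i vertices of V1 (parity class of i). -/
def Xrow (n i : ℕ) : Finset ℕ := (Finset.Icc 1 n).filter (fun x => (x + i) % 2 = 0)

/-- rank from the right. -/
def rk (n i x : ℕ) : ℕ := ((Xrow n i).filter (fun u => x ≤ u)).card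

/-- horizontal neighbour positions. -/
def Dset (n : ℕ) (S : Finset ℕ) : Finset ℕ :=
  (Finset.Icc 1 n).filter (fun z => z - 1 ∈ S ∨ z + 1 ∈ S)

lemma mem_Xrow {n i x : ℕ} : x ∈ Xrow n i ↔ (1 ≤ x ∧ x ≤ n ∧ (x + i) % 2 = 0) := by
  simp [Xrow, Finset.mem_filter, Finset.mem_Icc]; tauto

lemma Xrow_congr {n i j : ℕ} (h : i % 2 = j % 2) : Xrow n i = Xrow n j := by
  unfold Xrow; congr 1; ext x; constructor <;> intro hx <;> omega

lemma rk_congr {n i j x : ℕ} (h : i % 2 = j % 2) : rk n i x = rk n j x := by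
  unfold rk; rw [Xrow_congr h]

lemma rk_antitone {n i x y : ℕ} (h : x ≤ y) : rk n i y ≤ rk n i x := by
  apply Finset.card_le_card
  intro u hu
  simp only [Finset.mem_filter] at hu ⊢
  exact ⟨hu.1, le_trans h hu.2⟩

lemma one_le_rk {n i x : ℕ} (hx : x ∈ Xrow n i) : 1 ≤ rk n i x := by
  have : x ∈ (Xrow n i).filter (fun u => x ≤ u) := by
    simp [Finset.mem_filter, hx]
  exact Finset.card_pos.2 ⟨x, this⟩ 

lemma rk_le_card {n i x : ℕ} : rk n i x ≤ (Xrow n i).card :=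
  Finset.card_le_card (Finset.filter_subset _ _)

lemma rk_strict {n i x y : ℕ} (hx : x ∈ Xrow n i) (hxy : x < y) :
    rk n i y < rk n i x := by
  apply Finset.card_lt_card
  constructor
  · intro u hu
    simp only [Finset.mem_filter] at hu ⊢
    exact ⟨hu.1, le_trans (le_of_lt hxy) hu.2⟩
  · intro hsub
    have hxmem : x ∈ (Xrow n i).filter (fun u => x ≤ u) := by simp [hx]
    have := hsub hxmem
    simp only [Finset.mem_filter] at this
    omega

lemma rk_add_one_le {n i x : ℕ} (h1 : (1:ℕ) ∈ Xrow n i) (hx : x ∈ Xrow n i) (h2 : 2 ≤ x) :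
    rk n i x + 1 ≤ (Xrow n i).card := by
  have := rk_strict (n := n) (i := i) h1 (by omega : (1:ℕ) < x)
  have : rk n i x < rk n i 1 := this
  have h1' : rk n i 1 ≤ (Xrow n i).card := rk_le_card
  omega

lemma card_rk_le {n i m : ℕ} : ((Xrow n i).filter (fun x => rk n i x ≤ m)).card ≤ m := by
  have h := Finset.card_le_card_of_injOn (f := rk n i)
    (s := (Xrow n i).filter (fun x => rk n i x ≤ m)) (t := Finset.Icc 1 m)
    (by
      intro x hx
      simp only [Finset.coe_filter, Set.mem_setOf_eq, Finset.mem_filter] at hx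
      simp only [Finset.coe_Icc, Set.mem_Icc, Finset.mem_coe, Finset.mem_Icc]
      exact ⟨one_le_rk hx.1, hx.2⟩)
    (by
      intro x hx y hy hxy
      simp only [Finset.coe_filter, Set.mem_setOf_eq] at hx hy
      by_contra hne
      rcases lt_or_gt_of_ne hne with h | h
      · have := rk_strict hx.1 h; omega
      · have := rk_strict hy.1 h; omega)
  simpa using h


lemma rk_one {n i : ℕ} (h1 : (1:ℕ) ∈ Xrow n i) : rk n i 1 = (Xrow n i).card := by
  unfold rk
  congr 1
  apply Finset.filter_true_of_mem
  intro u hu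
  rw [mem_Xrow] at hu
  omega

lemma rk_n {n i : ℕ} (hn : n ∈ Xrow n i) : rk n i n = 1 := by
  unfold rk
  have : (Xrow n i).filter (fun u => n ≤ u) = {n} := by
    ext u
    simp only [Finset.mem_filter, Finset.mem_singleton, mem_Xrow]
    rw [mem_Xrow] at hn
    constructor
    · rintro ⟨⟨_, h2, _⟩, h4⟩; omega
    · rintro rfl; exact ⟨⟨hn.1, hn.2.1, hn.2.2⟩, le_refl _⟩
  rw [this, Finset.card_singleton]

lemma rk_succ {n i x : ℕ} (hp : (x + i) % 2 = 0) (h1 : 1 ≤ x) (h2 : x ≤ n) :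
    rk n i x = rk n (i + 1) (x + 1) + (if (n + i) % 2 = 0 then 1 else 0) := by
  classical
  set A := (Xrow n i).filter (fun u => x ≤ u) with hA
  set B := (Xrow n (i+1)).filter (fun u => x + 1 ≤ u) with hB
  have hBA : B = (A.erase n).image (· + 1) := by
    ext u
    simp only [hB, hA, Finset.mem_image, Finset.mem_erase, Finset.mem_filter, mem_Xrow]
    constructor
    · rintro ⟨⟨hu1, hu2, hu3⟩, hu4⟩
      refine ⟨u - 1, ⟨?_, ⟨?_, ?_, ?_⟩, ?_⟩, show u - 1 + 1 = u by omega⟩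
      all_goals omega
    · rintro ⟨a, ⟨ha0, ⟨ha1, ha2, ha3⟩, ha4⟩, rfl⟩
      show (1 ≤ a + 1 ∧ a + 1 ≤ n ∧ (a + 1 + (i + 1)) % 2 = 0) ∧ x + 1 ≤ a + 1
      refine ⟨⟨?_, ?_, ?_⟩, ?_⟩ <;> omega
  have hcardB : B.card = (A.erase n).card := by
    rw [hBA]
    exact Finset.card_image_of_injective _ (add_left_injective 1)
  have hnA : n ∈ A ↔ (n + i) % 2 = 0 := by
    simp only [hA, Finset.mem_filter, mem_Xrow]
    constructor
    · rintro ⟨⟨_, _, h⟩, _⟩; exact h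
    · intro h; exact ⟨⟨by omega, le_refl _, h⟩, h2⟩
  unfold rk
  rw [← hA, ← hB, hcardB]
  by_cases hc : (n + i) % 2 = 0
  · rw [if_pos hc]
    have hmem : n ∈ A := hnA.2 hc
    have := Finset.card_erase_of_mem hmem
    have hpos : 1 ≤ A.card := Finset.card_pos.2 ⟨n, hmem⟩
    omega
  · rw [if_neg hc]
    rw [Finset.erase_eq_of_notMem (fun h => hc (hnA.1 h))]
    omega

lemma rk_pred {n i x : ℕ} (hp : (x + i) % 2 = 0) (h1 : 2 ≤ x) (h2 : x ≤ n) :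
    rk n (i + 1) (x - 1) = rk n (i + 1) (x + 1) + 1 := by
  unfold rk
  have : (Xrow n (i+1)).filter (fun u => x - 1 ≤ u)
      = insert (x - 1) ((Xrow n (i+1)).filter (fun u => x + 1 ≤ u)) := by
    ext u
    simp only [Finset.mem_insert, Finset.mem_filter, mem_Xrow]
    constructor
    · rintro ⟨⟨hu1, hu2, hu3⟩, hu4⟩
      by_cases hux : u = x - 1
      · left; exact hux
      · right; exact ⟨⟨hu1, hu2, hu3⟩, by omega⟩
    · rintro (rfl | ⟨⟨hu1, hu2, hu3⟩, hu4⟩)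
      · exact ⟨⟨by omega, by omega, by omega⟩, le_refl _⟩
      · exact ⟨⟨hu1, hu2, hu3⟩, by omega⟩
  rw [this, Finset.card_insert_of_notMem]
  simp only [Finset.mem_filter]
  rintro ⟨_, h⟩
  omega


lemma Dset_subset_Icc {n : ℕ} {S : Finset ℕ} : Dset n S ⊆ Finset.Icc 1 n :=
  Finset.filter_subset _ _

lemma Dset_empty {n : ℕ} : Dset n (∅ : Finset ℕ) = ∅ := by
  unfold Dset
  apply Finset.filter_false_of_mem
  intro x _
  simp

/-- the image of S.erase n under +1 sits inside Dset. -/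
lemma eraseImg_subset_Dset {n : ℕ} {S : Finset ℕ} (hS : S ⊆ Finset.Icc 1 n) :
    ((S.erase n).image (· + 1)) ⊆ Dset n S := by
  intro z hz
  simp only [Finset.mem_image, Finset.mem_erase] at hz
  obtain ⟨a, ⟨ha0, ha1⟩, rfl⟩ := hz
  have := Finset.mem_Icc.1 (hS ha1)
  simp only [Dset, Finset.mem_filter, Finset.mem_Icc]
  constructor
  · constructor <;> omega
  · left; show a + 1 - 1 ∈ S; simpa using ha1

lemma L1 {n : ℕ} {S : Finset ℕ} (hS : S ⊆ Finset.Icc 1 n) :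
    (S.erase n).card ≤ (Dset n S).card := by
  calc (S.erase n).card = ((S.erase n).image (· + 1)).card :=
        (Finset.card_image_of_injective _ (add_left_injective 1)).symm
    _ ≤ (Dset n S).card := Finset.card_le_card (eraseImg_subset_Dset hS)

lemma card_insert_le' {α : Type*} [DecidableEq α] {a : α} {s t : Finset α}
    (ha : a ∈ t) (hs : s ⊆ t) (hns : a ∉ s) : s.card + 1 ≤ t.card := by
  have : insert a s ⊆ t := Finset.insert_subset ha hs
  have h2 := Finset.card_le_card this
  rw [Finset.card_insert_of_notMem hns] at h2
  omega

lemma L1' {n : ℕ} {S : Finset ℕ} (hS : S ⊆ Finset.Icc 1 n) (hne : S.Nonempty)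
    (h1 : (1:ℕ) ∉ S) : (S.erase n).card + 1 ≤ (Dset n S).card := by
  set m := S.min' hne with hm
  have hmS : m ∈ S := S.min'_mem hne
  have hmIcc := Finset.mem_Icc.1 (hS hmS)
  have hm2 : 2 ≤ m := by
    rcases Nat.lt_or_ge m 2 with h | h
    · interval_cases m
      · omega
      · exact absurd hmS h1
    · exact h
  rw [← Finset.card_image_of_injective (S.erase n) (add_left_injective 1)]
  apply card_insert_le' (a := m - 1)
  · simp only [Dset, Finset.mem_filter, Finset.mem_Icc]
    refine ⟨⟨by omega, by omega⟩, Or.inr ?_⟩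
    have : m - 1 + 1 = m := by omega
    rw [this]; exact hmS
  · exact eraseImg_subset_Dset hS
  · simp only [Finset.mem_image, Finset.mem_erase]
    rintro ⟨a, ⟨_, haS⟩, ha⟩
    have := S.min'_le a haS
    omega

lemma L2 {n : ℕ} {S : Finset ℕ} (hS : S ⊆ Finset.Icc 1 n) {g : ℕ}
    (hg : g ∉ S) (hg2 : g + 2 ∈ S) : (S.erase n).card + 1 ≤ (Dset n S).card := by
  have hgIcc := Finset.mem_Icc.1 (hS hg2)
  rw [← Finset.card_image_of_injective (S.erase n) (add_left_injective 1)]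
  apply card_insert_le' (a := g + 1)
  · simp only [Dset, Finset.mem_filter, Finset.mem_Icc]
    exact ⟨⟨by omega, by omega⟩, Or.inr hg2⟩
  · exact eraseImg_subset_Dset hS
  · simp only [Finset.mem_image, Finset.mem_erase]
    rintro ⟨a, ⟨_, haS⟩, ha⟩
    have : a = g := by omega
    subst this
    exact hg haS

/-- gap existence -/
lemma GE {n i : ℕ} {S : Finset ℕ} (hS : S ⊆ Xrow n i) :
    ∀ b ∈ S, ∀ a ∈ Xrow n i, a ∉ S → a < b → ∃ g, g ∉ S ∧ g + 2 ∈ S := by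
  intro b hb
  have key : ∀ k, ∀ a, a ∈ Xrow n i → a ∉ S → a < b → b - a ≤ k → ∃ g, g ∉ S ∧ g + 2 ∈ S := by
    intro k
    induction k with
    | zero => intro a _ _ h1 h2; exact absurd h1 (by omega)
    | succ k ih =>
      intro a haX haS hab hk
      by_cases h2 : a + 2 ∈ S
      · exact ⟨a, haS, h2⟩
      · have hbX := hS hb
        obtain ⟨hb1, hb2, hb3⟩ := mem_Xrow.1 hbX
        obtain ⟨ha1, ha4, ha3⟩ := mem_Xrow.1 haX
        have hne : a + 2 ≠ b := fun h => h2 (h ▸ hb)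
        have ha2 : a + 2 < b := by omega
        have ha2X : a + 2 ∈ Xrow n i := mem_Xrow.2 ⟨by omega, by omega, by omega⟩
        exact ih (a + 2) ha2X h2 ha2 (by omega)
  intro a haX haS hab
  exact key (b - a) a haX haS hab (le_refl _)

def UpClosed (X S : Finset ℕ) : Prop :=
  S ⊆ X ∧ ∀ a ∈ S, ∀ b ∈ X, a ≤ b → b ∈ S

lemma upclosed_total {X A B : Finset ℕ} (hA : UpClosed X A) (hB : UpClosed X B) :
    A ⊆ B ∨ B ⊆ A := by
  by_cases h : A ⊆ B
  · exact Or.inl h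
  · right
    rw [Finset.not_subset] at h
    obtain ⟨a, haA, haB⟩ := h
    intro b hbB
    rcases le_total b a with hba | hab
    · exact absurd (hB.2 b hbB a (hA.1 haA) hba) haB
    · exact hA.2 a haA b (hB.1 hbB) hab

lemma upclosed_union_card {X A B : Finset ℕ} (hA : UpClosed X A) (hB : UpClosed X B) :
    (A ∪ B).card ≤ max A.card B.card := by
  rcases upclosed_total hA hB with h | h
  · rw [Finset.union_eq_right.2 h]; exact le_max_right _ _
  · rw [Finset.union_eq_left.2 h]; exact le_max_left _ _

lemma upclosed_union {X A B : Finset ℕ} (hA : UpClosed X A) (hB : UpClosed X B) :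
    UpClosed X (A ∪ B) := by
  refine ⟨Finset.union_subset hA.1 hB.1, ?_⟩
  intro a ha b hb hab
  rcases Finset.mem_union.1 ha with h | h
  · exact Finset.mem_union.2 (Or.inl (hA.2 a h b hb hab))
  · exact Finset.mem_union.2 (Or.inr (hB.2 a h b hb hab))


lemma upclosed_Dset {n i : ℕ} {S : Finset ℕ} (h : UpClosed (Xrow n i) S) :
    UpClosed (Xrow n (i + 1)) (Dset n S) := by
  constructor
  · intro z hz
    simp only [Dset, Finset.mem_filter, Finset.mem_Icc] at hz
    rcases hz with ⟨⟨hz1, hz2⟩, hz3 | hz3⟩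
    · obtain ⟨w1, w2, w3⟩ := mem_Xrow.1 (h.1 hz3)
      exact mem_Xrow.2 ⟨hz1, hz2, by omega⟩
    · obtain ⟨w1, w2, w3⟩ := mem_Xrow.1 (h.1 hz3)
      exact mem_Xrow.2 ⟨hz1, hz2, by omega⟩
  · intro a ha b hb hab
    rcases eq_or_lt_of_le hab with rfl | hlt
    · exact ha
    · simp only [Dset, Finset.mem_filter, Finset.mem_Icc] at ha ⊢
      obtain ⟨⟨ha1, ha2⟩, hw⟩ := ha
      obtain ⟨hb1, hb2, hb3⟩ := mem_Xrow.1 hb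
      -- the witness w ∈ S with w ≤ a + 1
      have hwit : ∃ w ∈ S, w ≤ a + 1 := by
        rcases hw with h1 | h1
        · exact ⟨a - 1, h1, by omega⟩
        · exact ⟨a + 1, h1, le_refl _⟩
      obtain ⟨w, hwS, hwa⟩ := hwit
      -- parity of a : a ∈ Xrow n (i+1) ambient? derive from witness
      obtain ⟨hw1, hw2, hw3⟩ := mem_Xrow.1 (h.1 hwS)
      refine ⟨⟨hb1, hb2⟩, ?_⟩
      by_cases hbn : b + 1 ≤ n
      · right
        apply h.2 w hwS (b + 1) (mem_Xrow.2 ⟨by omega, hbn, by omega⟩)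
        omega
      · -- b = n
        left
        apply h.2 w hwS (b - 1) (mem_Xrow.2 ⟨by omega, by omega, by omega⟩)
        -- need w ≤ b - 1 : a < b, parity of a and b equal mod 2 hence a + 2 ≤ b?
        -- both a,b have parity of i+1? a: witness w has parity i; w = a-1 or a+1
        omega


/-- Dset of an up-closed set is covered by min'-1 together with the +1 shift. -/
lemma Dset_upclosed_subset {n i : ℕ} {S : Finset ℕ} (h : UpClosed (Xrow n i) S)
    (hne : S.Nonempty) :
    Dset n S ⊆ insert (S.min' hne - 1) ((S.erase n).image (· + 1)) := by
  intro z hz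
  simp only [Dset, Finset.mem_filter, Finset.mem_Icc] at hz
  obtain ⟨⟨hz1, hz2⟩, hw⟩ := hz
  set m := S.min' hne with hm
  have hmS : m ∈ S := S.min'_mem hne
  simp only [Finset.mem_insert, Finset.mem_image, Finset.mem_erase]
  rcases hw with h1 | h1
  · -- z - 1 ∈ S hence z = (z-1)+1
    obtain ⟨hq1, hq2, _⟩ := mem_Xrow.1 (h.1 h1)
    right
    exact ⟨z - 1, ⟨by omega, h1⟩, by omega⟩
  · -- z + 1 ∈ S
    by_cases hzm : z + 1 = m
    · left; omega
    · right
      obtain ⟨hq1, hq2, hq3⟩ := mem_Xrow.1 (h.1 h1)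
      obtain ⟨hm1, hm2, hm3⟩ := mem_Xrow.1 (h.1 hmS)
      have hmlt : m ≤ z - 1 := by
        have := S.min'_le _ h1
        omega
      have hz1S : z - 1 ∈ S := by
        apply h.2 m hmS (z - 1) (mem_Xrow.2 ⟨by omega, by omega, by omega⟩) hmlt
      exact ⟨z - 1, ⟨by omega, hz1S⟩, by omega⟩

lemma U {n i : ℕ} {S : Finset ℕ} (h : UpClosed (Xrow n i) S) (hne : S.Nonempty) :
    (Dset n S).card ≤ (S.erase n).card + 1 := by
  have h1 := Finset.card_le_card (Dset_upclosed_subset h hne)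
  have h2 := Finset.card_insert_le (S.min' hne - 1) ((S.erase n).image (· + 1))
  have h3 : ((S.erase n).image (· + 1)).card = (S.erase n).card :=
    Finset.card_image_of_injective _ (add_left_injective 1)
  omega

lemma U1 {n i : ℕ} {S : Finset ℕ} (h : UpClosed (Xrow n i) S) (h1S : (1:ℕ) ∈ S) :
    (Dset n S).card ≤ (S.erase n).card := by
  have hne : S.Nonempty := ⟨1, h1S⟩
  have hmin : S.min' hne = 1 := by
    have h1 := S.min'_le 1 h1S
    have h2 : 1 ≤ S.min' hne := by
      obtain ⟨w1, _, _⟩ := mem_Xrow.1 (h.1 (S.min'_mem hne))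
      exact w1
    omega
  have hsub := Dset_upclosed_subset h hne
  rw [hmin] at hsub
  have hsub2 : Dset n S ⊆ (S.erase n).image (· + 1) := by
    intro z hz
    have := hsub hz
    simp only [Finset.mem_insert] at this
    rcases this with h0 | h0
    · exfalso
      have := Dset_subset_Icc hz
      simp only [Finset.mem_Icc] at this
      omega
    · exact h0
  calc (Dset n S).card ≤ ((S.erase n).image (· + 1)).card := Finset.card_le_card hsub2
    _ = (S.erase n).card := Finset.card_image_of_injective _ (add_left_injective 1)

end RSAux

section Glue
open RSAux

variable {n : ℕ}

/-- the x-coordinates of row i of a set of pairs. -/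
def rowQ (Q : Finset (ℕ × ℕ)) (i : ℕ) : Finset ℕ :=
  (Q.filter (fun p => p.2 = i)).image Prod.fst

lemma mem_rowQ {Q : Finset (ℕ × ℕ)} {i x : ℕ} : x ∈ rowQ Q i ↔ (x, i) ∈ Q := by
  simp only [rowQ, Finset.mem_image, Finset.mem_filter]
  constructor
  · rintro ⟨⟨p1, p2⟩, ⟨hp, rfl⟩, rfl⟩
    exact hp
  · intro h
    exact ⟨(x, i), ⟨h, rfl⟩, rfl⟩

lemma card_rowQ {Q : Finset (ℕ × ℕ)} {i : ℕ} :
    (rowQ Q i).card = (Q.filter (fun p => p.2 = i)).card := by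
  apply Finset.card_image_of_injOn
  intro p hp q hq hpq
  simp only [Finset.coe_filter, Set.mem_setOf_eq] at hp hq
  exact Prod.ext hpq (hp.2.trans hq.2.symm)

lemma mem_V1 {p : ℕ × ℕ} : p ∈ V1 n ↔ (1 ≤ p.1 ∧ p.1 ≤ n ∧ 1 ≤ p.2 ∧ p.2 ≤ n ∧ (p.1 + p.2) % 2 = 0) := by
  simp only [V1, gridSet, Finset.mem_filter, Finset.mem_product, Finset.mem_Icc, Nat.even_iff]
  tauto

lemma rowQ_subset_Xrow {Q : Finset (ℕ × ℕ)} (hQ : Q ⊆ V1 n) {i : ℕ} :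
    rowQ Q i ⊆ Xrow n i := by
  intro x hx
  have := mem_V1.1 (hQ (mem_rowQ.1 hx))
  exact mem_Xrow.2 ⟨this.1, this.2.1, this.2.2.2.2⟩

lemma row_mem_bounds {Q : Finset (ℕ × ℕ)} (hQ : Q ⊆ V1 n) {i x : ℕ} (h : x ∈ rowQ Q i) :
    1 ≤ x ∧ x ≤ n ∧ 1 ≤ i ∧ i ≤ n ∧ (x + i) % 2 = 0 := by
  exact mem_V1.1 (hQ (mem_rowQ.1 h))

/-- cardinality glue for ranks. -/
lemma card_Xi_filter {i x : ℕ} (hi : 1 ≤ i) (hi2 : i ≤ n) :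
    ((Xi n i).filter (fun u => x ≤ u.1)).card = rk n i x := by
  unfold rk
  apply Finset.card_bij (fun p _ => p.1)
  · intro p hp
    simp only [Finset.mem_filter, Xi] at hp
    obtain ⟨⟨hp1, hp2⟩, hp3⟩ := hp
    have := mem_V1.1 hp1
    simp only [Finset.mem_filter]
    exact ⟨mem_Xrow.2 ⟨this.1, this.2.1, by rw [← hp2]; exact this.2.2.2.2⟩, hp3⟩
  · intro p hp q hq hpq
    simp only [Finset.mem_filter, Xi] at hp hq
    exact Prod.ext hpq (hp.1.2.trans hq.1.2.symm)
  · intro u hu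
    simp only [Finset.mem_filter] at hu
    obtain ⟨hu1, hu2⟩ := hu
    obtain ⟨w1, w2, w3⟩ := mem_Xrow.1 hu1
    refine ⟨(u, i), ?_, rfl⟩
    simp only [Finset.mem_filter, Xi]
    refine ⟨⟨mem_V1.2 ⟨w1, w2, hi, hi2, w3⟩, ?_⟩, hu2⟩
    trivial

lemma card_inter_Xi {Q : Finset (ℕ × ℕ)} (hQ : Q ⊆ V1 n) {i : ℕ} :
    (Q ∩ Xi n i).card = (rowQ Q i).card := by
  rw [card_rowQ]
  congr 1
  ext p
  simp only [Finset.mem_inter, Finset.mem_filter, Xi]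
  constructor
  · rintro ⟨h1, h2, h3⟩; exact ⟨h1, h3⟩
  · rintro ⟨h1, h2⟩; exact ⟨h1, hQ h1, h2⟩

lemma mem_rightShift {Q : Finset (ℕ × ℕ)} (hQ : Q ⊆ V1 n) {x j : ℕ} :
    (x, j) ∈ rightShift n Q ↔
      (1 ≤ x ∧ x ≤ n ∧ 1 ≤ j ∧ j ≤ n ∧ (x + j) % 2 = 0 ∧
        rk n j x ≤ (rowQ Q j).card) := by
  simp only [rightShift, Finset.mem_filter, gridSet, Finset.mem_product, Finset.mem_Icc,
    Nat.even_iff]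
  constructor
  · rintro ⟨⟨⟨a1, a2⟩, ⟨a3, a4⟩⟩, a5, a6⟩
    refine ⟨a1, a2, a3, a4, a5, ?_⟩
    rw [← card_Xi_filter a3 a4, ← card_inter_Xi hQ]
    exact a6
  · rintro ⟨a1, a2, a3, a4, a5, a6⟩
    refine ⟨⟨⟨a1, a2⟩, a3, a4⟩, a5, ?_⟩
    rw [card_Xi_filter a3 a4, card_inter_Xi hQ]
    exact a6

lemma rightShift_subset_V1 {Q : Finset (ℕ × ℕ)} : rightShift n Q ⊆ V1 n := by
  intro p hp
  simp only [rightShift, Finset.mem_filter] at hp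
  simp only [V1, Finset.mem_filter]
  exact ⟨hp.1, hp.2.1⟩

lemma rowQ_rightShift_subset {Q : Finset (ℕ × ℕ)} (hQ : Q ⊆ V1 n) {j : ℕ} :
    rowQ (rightShift n Q) j ⊆ (Xrow n j).filter (fun x => rk n j x ≤ (rowQ Q j).card) := by
  intro x hx
  obtain ⟨a1, a2, a3, a4, a5, a6⟩ := (mem_rightShift hQ).1 (mem_rowQ.1 hx)
  simp only [Finset.mem_filter]
  exact ⟨mem_Xrow.2 ⟨a1, a2, a5⟩, a6⟩

lemma card_rowQ_rightShift_le {Q : Finset (ℕ × ℕ)} (hQ : Q ⊆ V1 n) {j : ℕ} :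
    (rowQ (rightShift n Q) j).card ≤ (rowQ Q j).card :=
  le_trans (Finset.card_le_card (rowQ_rightShift_subset hQ)) card_rk_le

lemma upclosed_rowQ_rightShift {Q : Finset (ℕ × ℕ)} (hQ : Q ⊆ V1 n) {j : ℕ} :
    UpClosed (Xrow n j) (rowQ (rightShift n Q) j) := by
  constructor
  · intro x hx
    obtain ⟨a1, a2, _, _, a5, _⟩ := (mem_rightShift hQ).1 (mem_rowQ.1 hx)
    exact mem_Xrow.2 ⟨a1, a2, a5⟩
  · intro a ha b hb hab
    obtain ⟨a1, a2, a3, a4, a5, a6⟩ := (mem_rightShift hQ).1 (mem_rowQ.1 ha)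
    obtain ⟨b1, b2, b3⟩ := mem_Xrow.1 hb
    exact mem_rowQ.2 ((mem_rightShift hQ).2
      ⟨b1, b2, a3, a4, b3, le_trans (rk_antitone hab) a6⟩)

end Glue

section Nbr
open RSAux

variable {n : ℕ}

lemma gridAdj_iff {a b c d : ℕ} : gridAdj (a, b) (c, d) ↔
    ((a = c ∧ (b = d + 1 ∨ d = b + 1)) ∨ (b = d ∧ (a = c + 1 ∨ c = a + 1))) := by
  unfold gridAdj
  simp only [Int.abs_eq_natAbs]
  omega

lemma rowNbr_eq {T : Finset (ℕ × ℕ)} (hT : T ⊆ V1 n) {i : ℕ} (hi1 : 1 ≤ i) (hi2 : i ≤ n) :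
    rowQ (gridNbr n T) i = (Finset.Icc 1 n).filter (fun z => (z + i) % 2 = 1 ∧
      (z - 1 ∈ rowQ T i ∨ z + 1 ∈ rowQ T i ∨ z ∈ rowQ T (i - 1) ∨ z ∈ rowQ T (i + 1))) := by
  ext z
  rw [mem_rowQ]
  simp only [gridNbr, Finset.mem_filter, gridSet, Finset.mem_product, Finset.mem_Icc]
  constructor
  · rintro ⟨⟨⟨hz1, hz2⟩, _⟩, hnT, p, hpT, hadj⟩
    obtain ⟨p1, p2⟩ := p
    have hpV : 1 ≤ p1 ∧ p1 ≤ n ∧ 1 ≤ p2 ∧ p2 ≤ n ∧ (p1 + p2) % 2 = 0 := mem_V1.1 (hT hpT)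
    rw [gridAdj_iff] at hadj
    refine ⟨⟨hz1, hz2⟩, ?_, ?_⟩
    · rcases hadj with ⟨h1, h2 | h2⟩ | ⟨h1, h2 | h2⟩ <;> omega
    · rcases hadj with ⟨h1, h2 | h2⟩ | ⟨h1, h2 | h2⟩
      · -- p2 = i + 1, p1 = z
        right; right; right
        rw [mem_rowQ]
        have : (p1, p2) = (z, i + 1) := by rw [Prod.ext_iff]; constructor <;> omega
        rwa [this] at hpT
      · right; right; left
        rw [mem_rowQ]
        have : (p1, p2) = (z, i - 1) := by rw [Prod.ext_iff]; constructor <;> omega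
        rwa [this] at hpT
      · right; left
        rw [mem_rowQ]
        have : (p1, p2) = (z + 1, i) := by rw [Prod.ext_iff]; constructor <;> omega
        rwa [this] at hpT
      · left
        rw [mem_rowQ]
        have : (p1, p2) = (z - 1, i) := by rw [Prod.ext_iff]; constructor <;> omega
        rwa [this] at hpT
  · rintro ⟨⟨hz1, hz2⟩, hpar, hd⟩
    have hnT : (z, i) ∉ T := by
      intro h
      have := mem_V1.1 (hT h)
      omega
    refine ⟨⟨⟨hz1, hz2⟩, hi1, hi2⟩, hnT, ?_⟩
    rcases hd with h | h | h | h
    · rw [mem_rowQ] at h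
      have hb : 1 ≤ z - 1 ∧ z - 1 ≤ n ∧ 1 ≤ i ∧ i ≤ n ∧ (z - 1 + i) % 2 = 0 := mem_V1.1 (hT h)
      refine ⟨(z - 1, i), h, gridAdj_iff.2 ?_⟩
      right; exact ⟨rfl, Or.inr (by omega)⟩
    · rw [mem_rowQ] at h
      refine ⟨(z + 1, i), h, gridAdj_iff.2 ?_⟩
      right; exact ⟨rfl, Or.inl rfl⟩
    · rw [mem_rowQ] at h
      have hb : 1 ≤ z ∧ z ≤ n ∧ 1 ≤ i - 1 ∧ i - 1 ≤ n ∧ (z + (i - 1)) % 2 = 0 := mem_V1.1 (hT h)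
      refine ⟨(z, i - 1), h, gridAdj_iff.2 ?_⟩
      left; exact ⟨rfl, Or.inr (by omega)⟩
    · rw [mem_rowQ] at h
      refine ⟨(z, i + 1), h, gridAdj_iff.2 ?_⟩
      left; exact ⟨rfl, Or.inl rfl⟩

lemma deltaN_eq_sum {T : Finset (ℕ × ℕ)} :
    deltaN n T = ∑ i ∈ Finset.Icc 1 n, (rowQ (gridNbr n T) i).card := by
  unfold deltaN
  rw [Finset.card_eq_sum_card_fiberwise (f := Prod.snd) (t := Finset.Icc 1 n)]
  · apply Finset.sum_congr rfl
    intro i _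
    rw [card_rowQ]
  · intro p hp
    have : p ∈ gridSet n := Finset.filter_subset _ _ hp
    simp only [gridSet, Finset.mem_product] at this
    exact this.2

end Nbr

section Pyr
open RSAux

variable {n : ℕ} {Q : Finset (ℕ × ℕ)}

/-- pyramidality pushes horizontal neighbours down one row. -/
lemma Dsub (hQ : Q ⊆ V1 n) (hpyr : Pyramidal n Q) {j : ℕ} (hj : 1 ≤ j) :
    Dset n (rowQ Q (j + 1)) ⊆ rowQ Q j := by
  intro z hz
  simp only [Dset, Finset.mem_filter, Finset.mem_Icc] at hz
  obtain ⟨⟨hz1, hz2⟩, h | h⟩ := hz <;> rw [mem_rowQ]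
  · rw [mem_rowQ] at h
    have hb : 1 ≤ z - 1 ∧ z - 1 ≤ n ∧ 1 ≤ j + 1 ∧ j + 1 ≤ n ∧ (z - 1 + (j + 1)) % 2 = 0 :=
      mem_V1.1 (hQ h)
    have hstep := (hpyr (z - 1) (j + 1) h (by omega)).2 (by omega)
    have he : z - 1 + 1 = z := by omega
    rw [he] at hstep
    simpa using hstep
  · rw [mem_rowQ] at h
    have := (hpyr (z + 1) (j + 1) h (by omega)).1 (by omega)
    simpa using this

/-- descending the right edge. -/
lemma cone (hpyr : Pyramidal n Q) (hn : 2 ≤ n) :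
    ∀ b, (n, b) ∈ Q → ∀ y, 1 ≤ y → y ≤ b → (y + b) % 2 = 0 → (n, y) ∈ Q := by
  intro b
  induction b using Nat.strong_induction_on with
  | _ b ih =>
    intro hb y hy1 hy2 hpar
    rcases eq_or_lt_of_le hy2 with rfl | hlt
    · exact hb
    · have hyb : y + 2 ≤ b := by omega
      have h1 : (n - 1, b - 1) ∈ Q := (hpyr n b hb (by omega)).1 hn
      have h2 := (hpyr (n - 1) (b - 1) h1 (by omega)).2 (by omega)
      have he1 : n - 1 + 1 = n := by omega
      have he2 : b - 1 - 1 = b - 2 := by omega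
      rw [he1, he2] at h2
      exact ih (b - 2) (by omega) h2 y hy1 (by omega) (by omega)

lemma le_i1 {y : ℕ} (h : (1, y) ∈ Q) : y ≤ i1 Q := by
  have hm : ((1:ℕ), y) ∈ Q.filter (fun p => p.1 = 1) := by
    simp only [Finset.mem_filter]
    exact ⟨h, trivial⟩
  exact Finset.le_sup (f := Prod.snd) hm

lemma i2_mem (h : 0 < i2 n Q) : (n, i2 n Q) ∈ Q := by
  unfold i2 at h ⊢
  set F := Q.filter (fun p => p.1 = n) with hF
  have hne : F.Nonempty := by
    by_contra hcon
    rw [Finset.not_nonempty_iff_eq_empty] at hcon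
    rw [hcon] at h
    simp at h
  obtain ⟨b, hbF, hbs⟩ := Finset.exists_mem_eq_sup F hne Prod.snd
  simp only [hF, Finset.mem_filter] at hbF
  have : b = (n, F.sup Prod.snd) := by
    rw [Prod.ext_iff]
    exact ⟨hbF.2, hbs.symm⟩
  rw [← this]
  exact hbF.1

/-- the corner lemma: a vertex on the left edge forces right-edge vertices. -/
lemma corner (hQ : Q ⊆ V1 n) (hpyr : Pyramidal n Q) (h12 : i1 Q ≤ i2 n Q)
    {y y' : ℕ} (h : (1, y) ∈ Q) (hpar : (n + y) % 2 = 1) (hy'1 : 1 ≤ y')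
    (hy' : y' ≤ y + 1) (hpar' : (n + y') % 2 = 0) : (n, y') ∈ Q := by
  have hyV := mem_V1.1 (hQ h)
  have hy1 : y ≤ i1 Q := le_i1 h
  have hyi2 : y ≤ i2 n Q := le_trans hy1 h12
  have hpos : 0 < i2 n Q := by omega
  have hmem := i2_mem hpos
  have hi2V := mem_V1.1 (hQ hmem)
  have hn2 : 2 ≤ n := by omega
  have hy'i2 : y' ≤ i2 n Q := by omega
  exact cone hpyr hn2 (i2 n Q) hmem y' hy'1 hy'i2 (by omega)

end Pyr


section Main
open RSAux

variable {n : ℕ} {Q : Finset (ℕ × ℕ)}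

lemma exists_not_mem {S X : Finset ℕ} (h : S ⊆ X) (hc : S.card < X.card) :
    ∃ a ∈ X, a ∉ S := by
  apply Finset.exists_of_ssubset
  rw [Finset.ssubset_def]
  exact ⟨h, fun h2 => by have := Finset.card_le_card h2; omega⟩

/-- `E`-bound: if `m + ε ≤ r` then `m ≤ (S.erase n).card`. -/
lemma le_E (hQ : Q ⊆ V1 n) {i m : ℕ}
    (h : m + (if (n + i) % 2 = 0 then 1 else 0) ≤ (rowQ Q i).card) :
    m ≤ ((rowQ Q i).erase n).card := by
  by_cases hn : n ∈ rowQ Q i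
  · have hpar := (row_mem_bounds hQ hn).2.2.2.2
    rw [if_pos hpar] at h
    rw [Finset.card_erase_of_mem hn]
    omega
  · rw [Finset.erase_eq_of_notMem hn]
    split_ifs at h <;> omega

/-- The main lower-bound engine. -/
lemma masterB (hQ : Q ⊆ V1 n) (hpyr : Pyramidal n Q) (h12 : i1 Q ≤ i2 n Q)
    {i k M : ℕ} (hi1 : 1 ≤ i) (hi2 : i ≤ n)
    (hk1 : 1 ≤ k) (hkr : k ≤ (rowQ Q i).card)
    (hkl : (1:ℕ) ∈ Xrow n i → k + 1 ≤ (Xrow n i).card)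
    (hM1 : (Dset n (rowQ Q i)).card ≤ M)
    (hM2 : (1:ℕ) ∈ rowQ Q i → (n + i) % 2 = 1 → n ∉ Dset n (rowQ Q i) →
      (Dset n (rowQ Q i)).card + 1 ≤ M) :
    k + 1 ≤ M + (if (n + i) % 2 = 0 then 1 else 0) := by
  set S := rowQ Q i with hS
  have hSX : S ⊆ Xrow n i := rowQ_subset_Xrow hQ
  have hSIcc : S ⊆ Finset.Icc 1 n := hSX.trans (Finset.filter_subset _ _)
  have hne : S.Nonempty := Finset.card_pos.1 (by omega)
  have hrl : S.card ≤ (Xrow n i).card := Finset.card_le_card hSX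
  have hdd := L1 hSIcc
  by_cases h1 : (1:ℕ) ∈ S
  · have h1X : (1:ℕ) ∈ Xrow n i := hSX h1
    have hkl' := hkl h1X
    by_cases hpar : (n + i) % 2 = 0
    · -- ε = 1, goal k ≤ M
      rw [if_pos hpar]
      by_cases hnS : n ∈ S
      · have hE : (S.erase n).card = S.card - 1 := Finset.card_erase_of_mem hnS
        by_cases hrless : S.card < (Xrow n i).card
        · obtain ⟨a, haX, haS⟩ := exists_not_mem hSX hrless
          have haIcc := Finset.mem_Icc.1 (Finset.filter_subset _ _ haX)
          have hab : a < n := by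
            rcases eq_or_lt_of_le haIcc.2 with rfl | h
            · exact absurd hnS haS
            · exact h
          obtain ⟨g, hg1, hg2⟩ := GE hSX n hnS a haX haS hab
          have := L2 hSIcc hg1 hg2
          omega
        · -- r = ℓ
          omega
      · have hE : (S.erase n).card = S.card := by
          rw [Finset.erase_eq_of_notMem hnS]
        omega
    · -- ε = 0, goal k + 1 ≤ M
      rw [if_neg hpar]
      simp only [add_zero]
      have hnX : n ∉ Xrow n i := by
        intro h
        exact hpar (mem_Xrow.1 h).2.2
      have hnS : n ∉ S := fun h => hnX (hSX h)
      have hE : (S.erase n).card = S.card := by rw [Finset.erase_eq_of_notMem hnS]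
      by_cases hnD : n ∈ Dset n S
      · -- n - 1 ∈ S
        have hn1S : n - 1 ∈ S := by
          simp only [Dset, Finset.mem_filter] at hnD
          rcases hnD.2 with h | h
          · exact h
          · exact absurd (Finset.mem_Icc.1 (hSIcc h)).2 (by omega)
        by_cases hrless : S.card < (Xrow n i).card
        · obtain ⟨a, haX, haS⟩ := exists_not_mem hSX hrless
          have haIcc := Finset.mem_Icc.1 (Finset.filter_subset _ _ haX)
          have hanX : a ≠ n := fun h => hnX (h ▸ haX)
          have han1 : a ≠ n - 1 := fun h => haS (h ▸ hn1S)
          have hab : a < n - 1 := by omega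
          obtain ⟨g, hg1, hg2⟩ := GE hSX (n-1) hn1S a haX haS hab
          have := L2 hSIcc hg1 hg2
          omega
        · omega
      · have hcor := hM2 h1 (by omega) hnD
        omega
  · -- 1 ∉ S
    have := L1' hSIcc hne h1
    by_cases hpar : (n + i) % 2 = 0
    · rw [if_pos hpar]
      by_cases hnS : n ∈ S
      · have hE : (S.erase n).card = S.card - 1 := Finset.card_erase_of_mem hnS
        omega
      · have hE : (S.erase n).card = S.card := by rw [Finset.erase_eq_of_notMem hnS]
        omega
    · rw [if_neg hpar]
      have hnX : n ∉ Xrow n i := fun h => hpar (mem_Xrow.1 h).2.2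
      have hnS : n ∉ S := fun h => hnX (hSX h)
      have hE : (S.erase n).card = S.card := by rw [Finset.erase_eq_of_notMem hnS]
      omega

end Main


section Delta
open RSAux

variable {n : ℕ} {Q : Finset (ℕ × ℕ)}

lemma horiz_subset (hQ : Q ⊆ V1 n) {i : ℕ} (hi1 : 1 ≤ i) (hi2 : i ≤ n) :
    Dset n (rowQ Q i) ⊆ rowQ (gridNbr n Q) i := by
  rw [rowNbr_eq hQ hi1 hi2]
  intro z hz
  simp only [Dset, Finset.mem_filter, Finset.mem_Icc] at hz
  obtain ⟨⟨hz1, hz2⟩, hd⟩ := hz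
  rw [Finset.mem_filter]
  refine ⟨Finset.mem_Icc.2 ⟨hz1, hz2⟩, ?_, ?_⟩
  · rcases hd with h | h
    · obtain ⟨b1, _, _, _, b5⟩ := row_mem_bounds hQ h
      omega
    · obtain ⟨b1, _, _, _, b5⟩ := row_mem_bounds hQ h
      omega
  · rcases hd with h | h
    · exact Or.inl h
    · exact Or.inr (Or.inl h)

lemma vertD_subset (hQ : Q ⊆ V1 n) {i : ℕ} (hi1 : 1 ≤ i) (hi2 : i ≤ n) :
    rowQ Q (i - 1) ⊆ rowQ (gridNbr n Q) i := by
  rw [rowNbr_eq hQ hi1 hi2]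
  intro z hz
  obtain ⟨b1, b2, b3, b4, b5⟩ := row_mem_bounds hQ hz
  rw [Finset.mem_filter]
  exact ⟨Finset.mem_Icc.2 ⟨b1, b2⟩, by omega, Or.inr (Or.inr (Or.inl hz))⟩

lemma vertU_subset (hQ : Q ⊆ V1 n) {i : ℕ} (hi1 : 1 ≤ i) (hi2 : i ≤ n) :
    rowQ Q (i + 1) ⊆ rowQ (gridNbr n Q) i := by
  rw [rowNbr_eq hQ hi1 hi2]
  intro z hz
  obtain ⟨b1, b2, b3, b4, b5⟩ := row_mem_bounds hQ hz
  rw [Finset.mem_filter]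
  exact ⟨Finset.mem_Icc.2 ⟨b1, b2⟩, by omega, Or.inr (Or.inr (Or.inr hz))⟩

lemma Hbound (hQ : Q ⊆ V1 n) (hpyr : Pyramidal n Q) (h12 : i1 Q ≤ i2 n Q)
    {i : ℕ} (hi1 : 1 ≤ i) (hi2 : i ≤ n) :
    (Dset n (rowQ (rightShift n Q) i)).card ≤ (rowQ (gridNbr n Q) i).card := by
  rcases Finset.eq_empty_or_nonempty (rowQ (rightShift n Q) i) with he | hne
  · rw [he, Dset_empty]
    simp
  · have hSX : (rowQ Q i) ⊆ Xrow n i := rowQ_subset_Xrow hQ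
    have hSIcc : (rowQ Q i) ⊆ Finset.Icc 1 n := hSX.trans (Finset.filter_subset _ _)
    have hRJX : UpClosed (Xrow n i) (rowQ (rightShift n Q) i) := upclosed_rowQ_rightShift hQ
    have hrhor : (rowQ (rightShift n Q) i).card ≤ (rowQ Q i).card := card_rowQ_rightShift_le hQ
    have hr1 : 1 ≤ (rowQ (rightShift n Q) i).card := Finset.card_pos.2 hne
    have hSne : (rowQ Q i).Nonempty := Finset.card_pos.1 (by omega)
    have hrl : (rowQ Q i).card ≤ (Xrow n i).card := Finset.card_le_card hSX
    have ht1 : (Dset n (rowQ Q i)).card ≤ (rowQ (gridNbr n Q) i).card :=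
      Finset.card_le_card (horiz_subset hQ hi1 hi2)
    have hdd := L1 (n := n) hSIcc
    have hU := U hRJX hne
    by_cases hpar : (n + i) % 2 = 0
    · have hnX : n ∈ Xrow n i := mem_Xrow.2 ⟨by omega, le_rfl, hpar⟩
      have hnRJ : n ∈ (rowQ (rightShift n Q) i) := by
        apply mem_rowQ.2
        apply (mem_rightShift hQ).2
        refine ⟨by omega, le_rfl, hi1, hi2, hpar, ?_⟩
        rw [rk_n hnX]
        omega
      have hEr : ((rowQ (rightShift n Q) i).erase n).card = (rowQ (rightShift n Q) i).card - 1 := Finset.card_erase_of_mem hnRJ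
      by_cases h1 : (1:ℕ) ∈ (rowQ Q i)
      · by_cases hnS : n ∈ (rowQ Q i)
        · have hES : ((rowQ Q i).erase n).card = (rowQ Q i).card - 1 := Finset.card_erase_of_mem hnS
          by_cases hrless : (rowQ Q i).card < (Xrow n i).card
          · obtain ⟨a, haX, haS⟩ := exists_not_mem hSX hrless
            have haIcc := Finset.mem_Icc.1 (Finset.filter_subset _ _ haX)
            have hab : a < n := by
              rcases eq_or_lt_of_le haIcc.2 with rfl | h
              · exact absurd hnS haS
              · exact h
            obtain ⟨g, hg1, hg2⟩ := GE hSX n hnS a haX haS hab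
            have := L2 hSIcc hg1 hg2
            omega
          · have h1X : (1:ℕ) ∈ Xrow n i := hSX h1
            have h1RJ : (1:ℕ) ∈ (rowQ (rightShift n Q) i) := by
              apply mem_rowQ.2
              apply (mem_rightShift hQ).2
              obtain ⟨w1, w2, w3⟩ := mem_Xrow.1 h1X
              refine ⟨le_rfl, w2, hi1, hi2, w3, ?_⟩
              rw [rk_one h1X]
              omega
            have hU1 := U1 hRJX h1RJ
            omega
        · have hES : ((rowQ Q i).erase n).card = (rowQ Q i).card := by rw [Finset.erase_eq_of_notMem hnS]
          omega
      · have := L1' hSIcc hSne h1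
        by_cases hnS : n ∈ (rowQ Q i)
        · have hES : ((rowQ Q i).erase n).card = (rowQ Q i).card - 1 := Finset.card_erase_of_mem hnS
          omega
        · have hES : ((rowQ Q i).erase n).card = (rowQ Q i).card := by rw [Finset.erase_eq_of_notMem hnS]
          omega
    · have hnX : n ∉ Xrow n i := fun h => hpar (mem_Xrow.1 h).2.2
      have hnS : n ∉ (rowQ Q i) := fun h => hnX (hSX h)
      have hnRJ : n ∉ (rowQ (rightShift n Q) i) := fun h => hnX (hRJX.1 h)
      have hES : ((rowQ Q i).erase n).card = (rowQ Q i).card := by rw [Finset.erase_eq_of_notMem hnS]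
      have hEr : ((rowQ (rightShift n Q) i).erase n).card = (rowQ (rightShift n Q) i).card := by rw [Finset.erase_eq_of_notMem hnRJ]
      by_cases h1 : (1:ℕ) ∈ (rowQ Q i)
      · have h1X : (1:ℕ) ∈ Xrow n i := hSX h1
        by_cases hrless : (rowQ Q i).card < (Xrow n i).card
        · have hc : (n, i + 1) ∈ Q :=
            corner hQ hpyr h12 (mem_rowQ.1 h1) (by omega) (by omega) (by omega) (by omega)
          have hnT : n ∈ rowQ (gridNbr n Q) i := by
            rw [rowNbr_eq hQ hi1 hi2]
            rw [Finset.mem_filter]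
            refine ⟨Finset.mem_Icc.2 ⟨by omega, le_rfl⟩, by omega,
              Or.inr (Or.inr (Or.inr (mem_rowQ.2 hc)))⟩
          by_cases hnD : n ∈ Dset n (rowQ Q i)
          · have hn1S : n - 1 ∈ (rowQ Q i) := by
              simp only [Dset, Finset.mem_filter] at hnD
              rcases hnD.2 with h | h
              · exact h
              · exact absurd (Finset.mem_Icc.1 (hSIcc h)).2 (by omega)
            obtain ⟨a, haX, haS⟩ := exists_not_mem hSX hrless
            have haIcc := Finset.mem_Icc.1 (Finset.filter_subset _ _ haX)
            have hanX : a ≠ n := fun h => hnX (h ▸ haX)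
            have han1 : a ≠ n - 1 := fun h => haS (h ▸ hn1S)
            obtain ⟨g, hg1, hg2⟩ := GE hSX (n - 1) hn1S a haX haS (by omega)
            have := L2 hSIcc hg1 hg2
            omega
          · have := card_insert_le' hnT (horiz_subset hQ hi1 hi2) hnD
            omega
        · have h1RJ : (1:ℕ) ∈ (rowQ (rightShift n Q) i) := by
            apply mem_rowQ.2
            apply (mem_rightShift hQ).2
            obtain ⟨w1, w2, w3⟩ := mem_Xrow.1 h1X
            refine ⟨le_rfl, w2, hi1, hi2, w3, ?_⟩
            rw [rk_one h1X]
            omega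
          have hU1 := U1 hRJX h1RJ
          omega
      · have := L1' hSIcc hSne h1
        omega

end Delta

/-- Let Q ⊆ V₁ be a pyramidal set with i₁(Q) ≤ i₂(Q). Then the set Q' obtained from Q by
the right shifting is right-pyramidal and satisfies δ(Q') ≤ δ(Q). -/
theorem rightShift_rightPyramidal (n : ℕ) (Q : Finset (ℕ × ℕ)) (hQ : Q ⊆ V1 n)
    (hpyr : Pyramidal n Q) (h12 : i1 Q ≤ i2 n Q) :
    RightPyramidal n (rightShift n Q) ∧ deltaN n (rightShift n Q) ≤ deltaN n Q := by
  open RSAux in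
  constructor
  · constructor
    · -- Pyramidal
      intro x y hxy hy2
      obtain ⟨a1, a2, a3, a4, a5, a6⟩ := (mem_rightShift hQ).1 hxy
      set j := y - 1 with hjdef
      have hyj : y = j + 1 := by omega
      have hj1 : 1 ≤ j := by omega
      have hjn : j ≤ n := by omega
      have hxX : x ∈ Xrow n y := mem_Xrow.2 ⟨a1, a2, a5⟩
      have hshift := rk_succ (n := n) (i := y) a5 a1 a2
      have hcongr : ∀ z, rk n j z = rk n (y + 1) z := fun z => rk_congr (by omega)
      have hDsub : Dset n (rowQ Q y) ⊆ rowQ Q j := by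
        rw [hyj]; exact Dsub hQ hpyr hj1
      have hM1 : (Dset n (rowQ Q y)).card ≤ (rowQ Q j).card := Finset.card_le_card hDsub
      have hM2 : (1:ℕ) ∈ rowQ Q y → (n + y) % 2 = 1 → n ∉ Dset n (rowQ Q y) →
          (Dset n (rowQ Q y)).card + 1 ≤ (rowQ Q j).card := by
        intro h1 hpar hnD
        have hc : (n, j) ∈ Q :=
          corner hQ hpyr h12 (mem_rowQ.1 h1) hpar hj1 (by omega) (by omega)
        exact card_insert_le' (mem_rowQ.2 hc) hDsub hnD
      constructor
      · intro hx2
        apply (mem_rightShift hQ).2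
        refine ⟨by omega, by omega, hj1, hjn, by omega, ?_⟩
        rw [hcongr]
        have hpred := rk_pred (n := n) (i := y) a5 hx2 a2
        have hk1 : 1 ≤ rk n y x := one_le_rk hxX
        have hkl : (1:ℕ) ∈ Xrow n y → rk n y x + 1 ≤ (Xrow n y).card :=
          fun h1X => rk_add_one_le h1X hxX hx2
        have hmB := masterB hQ hpyr h12 (by omega : 1 ≤ y) a4 hk1 a6 hkl hM1 hM2
        by_cases hpar : (n + y) % 2 = 0
        · rw [if_pos hpar] at hshift hmB; omega
        · rw [if_neg hpar] at hshift hmB; omega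
      · intro hxn
        apply (mem_rightShift hQ).2
        refine ⟨by omega, hxn, hj1, hjn, by omega, ?_⟩
        rw [hcongr]
        have hSIcc : rowQ Q y ⊆ Finset.Icc 1 n :=
          (rowQ_subset_Xrow hQ).trans (Finset.filter_subset _ _)
        have hL1 := L1 (n := n) hSIcc
        have hE := le_E hQ (i := y) (m := rk n (y + 1) (x + 1)) (by omega)
        omega
    · -- right closure
      intro x y hxy hxn
      obtain ⟨a1, a2, a3, a4, a5, a6⟩ := (mem_rightShift hQ).1 hxy
      apply (mem_rightShift hQ).2
      exact ⟨by omega, hxn, a3, a4, by omega, le_trans (rk_antitone (by omega)) a6⟩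
  · -- delta bound
    rw [deltaN_eq_sum (T := rightShift n Q), deltaN_eq_sum (T := Q)]
    apply Finset.sum_le_sum
    intro i hi
    obtain ⟨hi1, hi2⟩ := Finset.mem_Icc.1 hi
    have hsub : rowQ (gridNbr n (rightShift n Q)) i ⊆
        (rowQ (rightShift n Q) (i - 1)) ∪ (rowQ (rightShift n Q) (i + 1)) ∪
          Dset n (rowQ (rightShift n Q) i) := by
      rw [rowNbr_eq rightShift_subset_V1 hi1 hi2]
      intro z hz
      rw [Finset.mem_filter] at hz
      obtain ⟨hzIcc, hzpar, hd⟩ := hz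
      simp only [Finset.mem_union]
      rcases hd with h | h | h | h
      · right; simp only [Dset, Finset.mem_filter]; exact ⟨hzIcc, Or.inl h⟩
      · right; simp only [Dset, Finset.mem_filter]; exact ⟨hzIcc, Or.inr h⟩
      · left; left; exact h
      · left; right; exact h
    have hup1 : UpClosed (Xrow n (i + 1)) (rowQ (rightShift n Q) (i - 1)) := by
      have h := upclosed_rowQ_rightShift (hQ := hQ) (j := i - 1)
      rwa [Xrow_congr (show (i - 1) % 2 = (i + 1) % 2 by omega)] at h
    have hup2 : UpClosed (Xrow n (i + 1)) (rowQ (rightShift n Q) (i + 1)) :=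
      upclosed_rowQ_rightShift hQ
    have hup3 : UpClosed (Xrow n (i + 1)) (Dset n (rowQ (rightShift n Q) i)) :=
      upclosed_Dset (upclosed_rowQ_rightShift hQ)
    have hcard := Finset.card_le_card hsub
    have hu12 := upclosed_union_card hup1 hup2
    have hu123 := upclosed_union_card (upclosed_union hup1 hup2) hup3
    have hb1 : (rowQ (rightShift n Q) (i - 1)).card ≤ (rowQ (gridNbr n Q) i).card :=
      le_trans (card_rowQ_rightShift_le hQ) (Finset.card_le_card (vertD_subset hQ hi1 hi2))
    have hb2 : (rowQ (rightShift n Q) (i + 1)).card ≤ (rowQ (gridNbr n Q) i).card :=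
      le_trans (card_rowQ_rightShift_le hQ) (Finset.card_le_card (vertU_subset hQ hi1 hi2))
    have hb3 := Hbound hQ hpyr h12 hi1 hi2
    omega
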